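/- With the matrices A_0,...,A_5 as above (from a balanced weighing matrix with v > k), the products satisfy A_3 A_4 = A_4 A_3 = k A_1 + (k(k−1)/(2(v−1))) A_2 and A_1 A_3 = A_4. -/
import Mathlib

open Matrix Kronecker

namespace BGWScheme

def P : Matrix (Fin 2) (Fin 2) ℚ := !![0, 1; 1, 0]

def J2 : Matrix (Fin 2) (Fin 2) ℚ := Matrix.of fun _ _ => 1

def Jv (v : ℕ) : Matrix (Fin v) (Fin v) ℚ := Matrix.of fun _ _ => 1

/-- Index set for the `4v × 4v` matrices of the scheme. -/
abbrev Idx (v : ℕ) := (Fin 2 × Fin v) ⊕ (Fin 2 × Fin v)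

def A0 (v : ℕ) : Matrix (Idx v) (Idx v) ℚ := 1

def A1 (v : ℕ) : Matrix (Idx v) (Idx v) ℚ :=
  Matrix.fromBlocks (P ⊗ₖ (1 : Matrix (Fin v) (Fin v) ℚ)) 0 0
    (P ⊗ₖ (1 : Matrix (Fin v) (Fin v) ℚ))

def A2 (v : ℕ) : Matrix (Idx v) (Idx v) ℚ :=
  Matrix.fromBlocks (J2 ⊗ₖ (Jv v - 1)) 0 0 (J2 ⊗ₖ (Jv v - 1))

def A3 (v : ℕ) (W1 W2 : Matrix (Fin v) (Fin v) ℚ) : Matrix (Idx v) (Idx v) ℚ :=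
  Matrix.fromBlocks 0 ((1 : Matrix (Fin 2) (Fin 2) ℚ) ⊗ₖ W1 + P ⊗ₖ W2)
    ((1 : Matrix (Fin 2) (Fin 2) ℚ) ⊗ₖ W1ᵀ + P ⊗ₖ W2ᵀ) 0

def A4 (v : ℕ) (W1 W2 : Matrix (Fin v) (Fin v) ℚ) : Matrix (Idx v) (Idx v) ℚ :=
  Matrix.fromBlocks 0 ((1 : Matrix (Fin 2) (Fin 2) ℚ) ⊗ₖ W2 + P ⊗ₖ W1)
    ((1 : Matrix (Fin 2) (Fin 2) ℚ) ⊗ₖ W2ᵀ + P ⊗ₖ W1ᵀ) 0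

def A5 (v : ℕ) (W1 W2 : Matrix (Fin v) (Fin v) ℚ) : Matrix (Idx v) (Idx v) ℚ :=
  Matrix.fromBlocks 0 (J2 ⊗ₖ (Jv v - W1 - W2)) (J2 ⊗ₖ (Jv v - W1ᵀ - W2ᵀ)) 0

lemma P_mul_P : P * P = 1 := by
  ext i j
  fin_cases i <;> fin_cases j <;>
    simp [P, Matrix.mul_apply, Fin.sum_univ_two, Matrix.one_apply]

lemma J2_eq : J2 = 1 + P := by
  ext i j
  fin_cases i <;> fin_cases j <;> simp [J2, P, Matrix.one_apply]

/-- Key block computation. -/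
lemma block_eq (v : ℕ) (k c : ℚ) (W1 W2 : Matrix (Fin v) (Fin v) ℚ)
    (hS : W1 * W1ᵀ + W2 * W2ᵀ = k • (1 : Matrix (Fin v) (Fin v) ℚ) + c • (Jv v - 1))
    (hM : W1 * W2ᵀ + W2 * W1ᵀ = c • (Jv v - 1)) :
    ((1 : Matrix (Fin 2) (Fin 2) ℚ) ⊗ₖ W1 + P ⊗ₖ W2) *
      ((1 : Matrix (Fin 2) (Fin 2) ℚ) ⊗ₖ W2ᵀ + P ⊗ₖ W1ᵀ)
      = k • (P ⊗ₖ (1 : Matrix (Fin v) (Fin v) ℚ)) + c • (J2 ⊗ₖ (Jv v - 1)) := by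
  have h1 : P ⊗ₖ (W1 * W1ᵀ) + P ⊗ₖ (W2 * W2ᵀ)
      = k • (P ⊗ₖ (1 : Matrix (Fin v) (Fin v) ℚ)) + c • (P ⊗ₖ (Jv v - 1)) := by
    rw [← Matrix.kronecker_add, hS, Matrix.kronecker_add, Matrix.kronecker_smul,
      Matrix.kronecker_smul]
  have h2 : (1 : Matrix (Fin 2) (Fin 2) ℚ) ⊗ₖ (W1 * W2ᵀ)
        + (1 : Matrix (Fin 2) (Fin 2) ℚ) ⊗ₖ (W2 * W1ᵀ)
      = c • ((1 : Matrix (Fin 2) (Fin 2) ℚ) ⊗ₖ (Jv v - 1)) := by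
    rw [← Matrix.kronecker_add, hM, Matrix.kronecker_smul]
  rw [J2_eq, add_mul, mul_add, mul_add, ← Matrix.mul_kronecker_mul,
    ← Matrix.mul_kronecker_mul, ← Matrix.mul_kronecker_mul, ← Matrix.mul_kronecker_mul,
    P_mul_P, one_mul, one_mul, mul_one, Matrix.add_kronecker]
  linear_combination (norm := module) h1 + h2

/-- For a balanced weighing matrix `W = W₁ − W₂` with parameters `(v,k,λ)`,
`λ = k(k−1)/(v−1)`, `v > k`, the matrices `A₁, A₂, A₃, A₄` satisfy
`A₃ A₄ = A₄ A₃ = k A₁ + (k(k−1)/(2(v−1))) A₂` and `A₁ A₃ = A₄`. -/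
theorem scheme_product_relations (v : ℕ) (hv : 1 < v) (k : ℚ) (hvk : k < v)
    (W1 W2 : Matrix (Fin v) (Fin v) ℚ)
    (h01a : ∀ x y, W1 x y = 0 ∨ W1 x y = 1)
    (h01b : ∀ x y, W2 x y = 0 ∨ W2 x y = 1)
    (hdisj : ∀ x y, W1 x y = 1 → W2 x y ≠ 1)
    (hW : (W1 - W2) * (W1 - W2)ᵀ = k • (1 : Matrix (Fin v) (Fin v) ℚ))
    (hW' : (W1 - W2)ᵀ * (W1 - W2) = k • (1 : Matrix (Fin v) (Fin v) ℚ))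
    (hN : (W1 + W2) * (W1 + W2)ᵀ
      = (k - k * (k - 1) / ((v : ℚ) - 1)) • (1 : Matrix (Fin v) (Fin v) ℚ)
        + (k * (k - 1) / ((v : ℚ) - 1)) • Jv v)
    (hN' : (W1 + W2)ᵀ * (W1 + W2)
      = (k - k * (k - 1) / ((v : ℚ) - 1)) • (1 : Matrix (Fin v) (Fin v) ℚ)
        + (k * (k - 1) / ((v : ℚ) - 1)) • Jv v) :
    A3 v W1 W2 * A4 v W1 W2
      = k • A1 v + (k * (k - 1) / (2 * ((v : ℚ) - 1))) • A2 v ∧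
    A4 v W1 W2 * A3 v W1 W2
      = k • A1 v + (k * (k - 1) / (2 * ((v : ℚ) - 1))) • A2 v ∧
    A1 v * A3 v W1 W2 = A4 v W1 W2 := by
  set c : ℚ := k * (k - 1) / (2 * ((v : ℚ) - 1)) with hc
  have hcc : k * (k - 1) / ((v : ℚ) - 1) = 2 * c := by rw [hc, mul_comm (2:ℚ), ← div_div]; ring
  -- expand the two product hypotheses
  have h1 : W1 * W1ᵀ - W1 * W2ᵀ - (W2 * W1ᵀ - W2 * W2ᵀ)
      = k • (1 : Matrix (Fin v) (Fin v) ℚ) := by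
    rw [← hW, Matrix.transpose_sub, sub_mul, mul_sub, mul_sub]
  have h2 : W1 * W1ᵀ + W1 * W2ᵀ + (W2 * W1ᵀ + W2 * W2ᵀ)
      = (k - 2 * c) • (1 : Matrix (Fin v) (Fin v) ℚ) + (2 * c) • Jv v := by
    rw [← hcc, ← hN, Matrix.transpose_add, add_mul, mul_add, mul_add]
  have h1' : W1ᵀ * W1 - W1ᵀ * W2 - (W2ᵀ * W1 - W2ᵀ * W2)
      = k • (1 : Matrix (Fin v) (Fin v) ℚ) := by
    rw [← hW', Matrix.transpose_sub, sub_mul, mul_sub, mul_sub]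
  have h2' : W1ᵀ * W1 + W1ᵀ * W2 + (W2ᵀ * W1 + W2ᵀ * W2)
      = (k - 2 * c) • (1 : Matrix (Fin v) (Fin v) ℚ) + (2 * c) • Jv v := by
    rw [← hcc, ← hN', Matrix.transpose_add, add_mul, mul_add, mul_add]
  have hS : W1 * W1ᵀ + W2 * W2ᵀ
      = k • (1 : Matrix (Fin v) (Fin v) ℚ) + c • (Jv v - 1) := by
    linear_combination (norm := module) (2:ℚ)⁻¹ • h1 + (2:ℚ)⁻¹ • h2
  have hM : W1 * W2ᵀ + W2 * W1ᵀ = c • (Jv v - 1) := by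
    linear_combination (norm := module) (2:ℚ)⁻¹ • h2 - (2:ℚ)⁻¹ • h1
  have hS' : W1ᵀ * W1 + W2ᵀ * W2
      = k • (1 : Matrix (Fin v) (Fin v) ℚ) + c • (Jv v - 1) := by
    linear_combination (norm := module) (2:ℚ)⁻¹ • h1' + (2:ℚ)⁻¹ • h2'
  have hM' : W1ᵀ * W2 + W2ᵀ * W1 = c • (Jv v - 1) := by
    linear_combination (norm := module) (2:ℚ)⁻¹ • h2' - (2:ℚ)⁻¹ • h1'
  -- block identities
  have b1 := block_eq v k c W1 W2 hS hM
  have b2 := block_eq v k c W1ᵀ W2ᵀ (by simpa using hS') (by simpa using hM')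
  have b3 := block_eq v k c W2 W1 (by rw [add_comm]; exact hS) (by rw [add_comm]; exact hM)
  have b4 := block_eq v k c W2ᵀ W1ᵀ (by simpa [add_comm] using hS')
    (by simpa [add_comm] using hM')
  rw [Matrix.transpose_transpose, Matrix.transpose_transpose] at b2 b4
  refine ⟨?_, ?_, ?_⟩
  · simp only [A1, A2, A3, A4, Matrix.fromBlocks_multiply, Matrix.fromBlocks_smul,
      Matrix.fromBlocks_add, Matrix.mul_zero, Matrix.zero_mul, add_zero, zero_add,
      smul_zero]
    rw [b1, b2]
  · simp only [A1, A2, A3, A4, Matrix.fromBlocks_multiply, Matrix.fromBlocks_smul,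
      Matrix.fromBlocks_add, Matrix.mul_zero, Matrix.zero_mul, add_zero, zero_add,
      smul_zero]
    rw [b3, b4]
  · simp only [A1, A3, A4, Matrix.fromBlocks_multiply, Matrix.mul_zero, Matrix.zero_mul,
      add_zero, zero_add]
    rw [mul_add, mul_add, ← Matrix.mul_kronecker_mul, ← Matrix.mul_kronecker_mul,
      ← Matrix.mul_kronecker_mul, ← Matrix.mul_kronecker_mul, P_mul_P]
    simp only [one_mul, mul_one]
    rw [add_comm (P ⊗ₖ W1), add_comm (P ⊗ₖ W1ᵀ)]

end BGWScheme
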